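/- Let f₀(τ) = Σ_{k=1}^∞ e^{√k/2} τ^k and g(t) = ln( μ_{f₀}(t)/(1−t) ). Then there exists t₀ ∈ (1/2,1) such that for all t ∈ (t₀,1): g(t) < 3·g(2t−1). -/

import Mathlib

open MeasureTheory Set

/-- Maximal term of the power series with coefficients `a`. -/
noncomputable def maxTerm (a : ℕ → ℂ) (r : ℝ) : ℝ :=
  ⨆ n : ℕ, ‖a n‖ * r ^ n

/-- Coefficients of `f₀(τ) = ∑_{k=1}^∞ e^{√k/2} τ^k`. -/
noncomputable def f0Coef : ℕ → ℂ := fun k =>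
  if k = 0 then 0 else (Real.exp (Real.sqrt k / 2) : ℂ)

/-- `g(t) = ln(μ_{f₀}(t)/(1−t))`. -/
noncomputable def gFun (t : ℝ) : ℝ := Real.log (maxTerm f0Coef t / (1 - t))

lemma abs_f0Coef {k : ℕ} (hk : k ≠ 0) :
    ‖f0Coef k‖ = Real.exp (Real.sqrt k / 2) := by
  unfold f0Coef
  rw [if_neg hk, Complex.norm_real, Real.norm_eq_abs, abs_of_pos (Real.exp_pos _)]

lemma term_le {t : ℝ} (ht0 : 0 < t) (ht1 : t < 1) (n : ℕ) :
    ‖f0Coef n‖ * t ^ n ≤ Real.exp (1 / (16 * (-Real.log t))) := by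
  have hL : 0 < -Real.log t := by
    have := Real.log_neg ht0 ht1; linarith
  rcases Nat.eq_zero_or_pos n with h0 | h1
  · subst h0
    simp only [f0Coef, if_pos rfl]
    simp
    exact (Real.exp_pos _).le
  · rw [abs_f0Coef h1.ne']
    have htn : t ^ n = Real.exp (n * Real.log t) := by
      rw [← Real.log_pow, Real.exp_log (pow_pos ht0 n)]
    rw [htn, ← Real.exp_add, Real.exp_le_exp]
    have hu : (0:ℝ) ≤ Real.sqrt n := Real.sqrt_nonneg _
    have hu2 : (Real.sqrt n) ^ 2 = (n : ℝ) := Real.sq_sqrt (Nat.cast_nonneg n)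
    rw [le_div_iff₀ (by positivity)]
    set u := Real.sqrt n with hudef
    have h3 : (-Real.log t) ^ 2 * ((n : ℝ) - u ^ 2) = 0 := by rw [hu2]; ring
    nlinarith [sq_nonneg (4 * (-Real.log t) * u - 1), h3]

lemma bddAbove_terms {t : ℝ} (ht0 : 0 < t) (ht1 : t < 1) :
    BddAbove (Set.range fun n : ℕ => ‖f0Coef n‖ * t ^ n) := by
  refine ⟨Real.exp (1 / (16 * (-Real.log t))), ?_⟩
  rintro x ⟨n, rfl⟩
  exact term_le ht0 ht1 n

lemma maxTerm_le {t : ℝ} (ht0 : 0 < t) (ht1 : t < 1) :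
    maxTerm f0Coef t ≤ Real.exp (1 / (16 * (-Real.log t))) :=
  ciSup_le (term_le ht0 ht1)

lemma le_maxTerm {t : ℝ} (ht0 : 0 < t) (ht1 : t < 1) (k : ℕ) :
    ‖f0Coef k‖ * t ^ k ≤ maxTerm f0Coef t :=
  le_ciSup (bddAbove_terms ht0 ht1) k

lemma maxTerm_pos {t : ℝ} (ht0 : 0 < t) (ht1 : t < 1) :
    0 < maxTerm f0Coef t := by
  have h := le_maxTerm ht0 ht1 1
  rw [abs_f0Coef one_ne_zero] at h
  refine lt_of_lt_of_le ?_ h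
  positivity

lemma gFun_upper {t : ℝ} (ht0 : 0 < t) (ht1 : t < 1) :
    gFun t ≤ 1 / (16 * (-Real.log t)) - Real.log (1 - t) := by
  have hμ := maxTerm_pos ht0 ht1
  rw [gFun, Real.log_div hμ.ne' (by linarith : (1:ℝ) - t ≠ 0)]
  have hlog : Real.log (maxTerm f0Coef t) ≤ 1 / (16 * (-Real.log t)) := by
    calc Real.log (maxTerm f0Coef t)
        ≤ Real.log (Real.exp (1 / (16 * (-Real.log t)))) :=
          Real.log_le_log hμ (maxTerm_le ht0 ht1)
      _ = 1 / (16 * (-Real.log t)) := Real.log_exp _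
  linarith

lemma gFun_lower {s : ℝ} (hs0 : 0 < s) (hs1 : s < 1) (hL14 : -Real.log s ≤ 1/4) :
    1 / (16 * (-Real.log s)) - 1/2 - Real.log (1 - s) ≤ gFun s := by
  set L := -Real.log s with hLdef
  have hls : Real.log s < 0 := Real.log_neg hs0 hs1
  have hL0 : 0 < L := by rw [hLdef]; linarith
  have hlsL : Real.log s = -L := by rw [hLdef]; ring
  set x := 1 / (16 * L ^ 2) with hxdef
  have hx1 : 1 ≤ x := by
    rw [hxdef, le_div_iff₀ (by positivity)]
    nlinarith
  set k := ⌊x⌋₊ with hkdef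
  have hk1 : 1 ≤ k := Nat.le_floor (by exact_mod_cast hx1)
  have hkx : (k : ℝ) ≤ x := Nat.floor_le (by linarith)
  have hxk : x - 1 < (k : ℝ) := Nat.sub_one_lt_floor x
  have hsq : 1 / (4 * L) - 1 ≤ Real.sqrt k := by
    rcases le_or_gt (1 / (4 * L) - 1) 0 with h | h
    · exact h.trans (Real.sqrt_nonneg _)
    · have hx2 : x = (1 / (4 * L)) ^ 2 := by rw [hxdef]; field_simp; ring
      have hLq : (2:ℝ) ≤ 1 / (2 * L) := by
        rw [le_div_iff₀ (by positivity)]; linarith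
      have hq : 1 / (2 * L) = 2 * (1 / (4 * L)) := by field_simp; ring
      have hkey : ((1 / (4 * L) - 1) ^ 2 : ℝ) ≤ (k : ℝ) := by nlinarith
      have h2 := Real.sqrt_le_sqrt hkey
      rwa [Real.sqrt_sq h.le] at h2
  have hterm := le_maxTerm hs0 hs1 k
  rw [abs_f0Coef (by omega : k ≠ 0)] at hterm
  have hμ := maxTerm_pos hs0 hs1
  have hlogμ : Real.sqrt k / 2 + (k : ℝ) * Real.log s ≤ Real.log (maxTerm f0Coef s) := by
    have h1 : Real.log (Real.exp (Real.sqrt k / 2) * s ^ k) ≤ Real.log (maxTerm f0Coef s) :=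
      Real.log_le_log (by positivity) hterm
    rwa [Real.log_mul (Real.exp_pos _).ne' (by positivity), Real.log_exp, Real.log_pow] at h1
  rw [gFun, Real.log_div hμ.ne' (by linarith : (1:ℝ) - s ≠ 0)]
  have hks : x * Real.log s ≤ (k : ℝ) * Real.log s := by nlinarith
  have hxls : x * Real.log s = -(1 / (16 * L)) := by
    rw [hxdef, hlsL]; field_simp
  have he : (1 / (4 * L) - 1) / 2 = 1 / (16 * L) + 1 / (16 * L) - 1 / 2 := by
    field_simp; ring
  have hsq2 : (1 / (4 * L) - 1) / 2 ≤ Real.sqrt k / 2 := by linarith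
  linarith

theorem statement16 :
    ∃ t₀ ∈ Set.Ioo (1/2 : ℝ) 1, ∀ t ∈ Set.Ioo t₀ 1,
      gFun t < 3 * gFun (2 * t - 1) := by
  refine ⟨19/20, by norm_num, ?_⟩
  rintro t ⟨ht0, ht1⟩
  have ht0' : (0:ℝ) < t := by linarith
  have h1t : 0 < 1 - t := by linarith
  have h1t20 : 1 - t < 1/20 := by linarith
  set s := 2 * t - 1 with hs
  have hs0 : 0 < s := by rw [hs]; linarith
  have hs1 : s < 1 := by rw [hs]; linarith
  have hs9 : 9/10 < s := by rw [hs]; linarith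
  have h1s : 1 - s = 2 * (1 - t) := by rw [hs]; ring
  -- bounds on -log t and -log s
  have hLt : 1 - t ≤ -Real.log t := by
    have := Real.log_le_sub_one_of_pos ht0'; linarith
  have hLt0 : 0 < -Real.log t := by
    have := Real.log_neg ht0' ht1; linarith
  have hLs0 : 0 < -Real.log s := by
    have := Real.log_neg hs0 hs1; linarith
  have hLs_ub : -Real.log s ≤ (1 - s) / s := by
    have h := Real.log_le_sub_one_of_pos (show (0:ℝ) < s⁻¹ by positivity)
    rw [Real.log_inv] at h
    have he : s⁻¹ - 1 = (1 - s) / s := by field_simp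
    linarith
  have hLs_ub' : -Real.log s ≤ 20 * (1 - t) / 9 := by
    have h1 : (1 - s) / s ≤ 20 * (1 - t) / 9 := by
      rw [div_le_div_iff₀ hs0 (by norm_num)]
      nlinarith
    linarith
  have hLs14 : -Real.log s ≤ 1/4 := by
    have : 20 * (1 - t) / 9 ≤ 1/4 := by
      rw [div_le_div_iff₀ (by norm_num) (by norm_num)]
      nlinarith
    linarith
  have hub := gFun_upper ht0' ht1
  have hlb := gFun_lower hs0 hs1 hLs14
  -- fraction comparisons
  have hf1 : 1 / (16 * (-Real.log t)) ≤ 1 / (16 * (1 - t)) :=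
    one_div_le_one_div_of_le (by positivity) (by linarith)
  have hf2 : 9 / (320 * (1 - t)) ≤ 1 / (16 * (-Real.log s)) := by
    have h1 : 1 / (16 * (20 * (1 - t) / 9)) ≤ 1 / (16 * (-Real.log s)) :=
      one_div_le_one_div_of_le (by positivity) (by linarith)
    have h2 : 1 / (16 * (20 * (1 - t) / 9)) = 9 / (320 * (1 - t)) := by
      field_simp; ring
    linarith
  have hfrac : 1 / (16 * (1 - t)) + 7/16 ≤ 27 / (320 * (1 - t)) := by
    have e1 : 27 / (320 * (1 - t)) - 1 / (16 * (1 - t)) = 7 / (320 * (1 - t)) := by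
      field_simp; ring
    have h2 : 7/16 ≤ 7 / (320 * (1 - t)) := by
      rw [div_le_div_iff₀ (by norm_num) (by positivity)]
      nlinarith
    linarith
  -- numeric log facts
  have hlog2 : Real.log 2 < 0.6931471808 := Real.log_two_lt_d9
  have he2 : Real.exp 2 < 20 := by
    have h := Real.exp_one_lt_d9
    have h2 : Real.exp 2 = Real.exp 1 * Real.exp 1 := by
      rw [← Real.exp_add]; norm_num
    nlinarith [Real.exp_pos 1]
  have hlog1t : Real.log (1 - t) < -2 := by
    have hlt : 1 - t < Real.exp (-2) := by
      rw [Real.exp_neg]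
      have : (1:ℝ)/20 < (Real.exp 2)⁻¹ := by
        rw [div_lt_iff₀ (by norm_num), inv_mul_eq_div, lt_div_iff₀ (Real.exp_pos 2)]
        linarith
      linarith
    have := Real.log_lt_log h1t hlt
    rwa [Real.log_exp] at this
  have hlog1s : Real.log (1 - s) = Real.log 2 + Real.log (1 - t) := by
    rw [h1s, Real.log_mul two_ne_zero h1t.ne']
  have h27 : 27 / (320 * (1 - t)) = 3 * (9 / (320 * (1 - t))) := by ring
  -- combine:
  -- gFun t ≤ 1/(16(1-t)) - log(1-t)
  -- gFun s ≥ 9/(320(1-t)) - 1/2 - log 2 - log(1-t)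
  linarith
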